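/- Let (x_i, f_i) be a Schauder frame for a Banach space X with minimal associated norm ‖∑ a_i z_i‖_min = sup_{m≤n} ‖∑_{i=m}^n a_i x_i‖ on c₀₀ (completion Z_min). If (y_i) is any associated basis for (x_i, f_i) in an associated space Y, then (y_i) dominates (z_i): there exists K > 0 such that ‖∑ a_i z_i‖_min ≤ K ‖∑ a_i y_i‖ for all finitely supported scalars (a_i). -/
import Mathlib


open Filter Finset

/-- every associated basis of a Schauder frame dominates the minimal
associated basis. -/
theorem stmt_7 (X Y : Type*) [NormedAddCommGroup X] [NormedSpace ℝ X] [CompleteSpace X]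
    [NormedAddCommGroup Y] [NormedSpace ℝ Y] [CompleteSpace Y]
    (x : ℕ → X) (f : ℕ → X →L[ℝ] ℝ)
    (hframe : ∀ v : X, Tendsto (fun n => ∑ i ∈ Finset.range n, f i v • x i) atTop (nhds v))
    (hx : ∀ i, x i ≠ 0)
    (y : ℕ → Y) (ystar : ℕ → Y →L[ℝ] ℝ)
    (hbi : ∀ i j, ystar i (y j) = if i = j then 1 else 0)
    (hbasis : ∀ w : Y,
      Tendsto (fun n => ∑ i ∈ Finset.range n, ystar i w • y i) atTop (nhds w))
    (T : X →L[ℝ] Y) (S : Y →L[ℝ] X)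
    (hT : ∀ v : X, Tendsto (fun n => ∑ i ∈ Finset.range n, f i v • y i) atTop (nhds (T v)))
    (hS : ∀ i, S (y i) = x i) :
    ∃ K : ℝ, 0 < K ∧ ∀ (a : ℕ → ℝ) (s : Finset ℕ), (∀ i ∉ s, a i = 0) →
      (⨆ p : ℕ × ℕ, ‖∑ i ∈ Finset.Icc p.1 p.2, a i • x i‖) ≤
        K * ‖∑ i ∈ s, a i • y i‖ := by
  classical
  -- basis projections
  set g : ℕ → Y →L[ℝ] Y := fun n => ∑ i ∈ Finset.range n, (ystar i).smulRight (y i) with hg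
  have hgw : ∀ n w, g n w = ∑ i ∈ Finset.range n, ystar i w • y i := by
    intro n w
    simp [hg, ContinuousLinearMap.sum_apply]
  have hptwise : ∀ w : Y, ∃ C, ∀ n, ‖g n w‖ ≤ C := by
    intro w
    have h := (hbasis w).norm
    obtain ⟨C, hC⟩ := h.bddAbove_range
    exact ⟨C, fun n => by simpa [hgw] using hC ⟨n, rfl⟩⟩
  obtain ⟨C, hC⟩ := banach_steinhaus hptwise
  have hC0 : 0 ≤ C := (norm_nonneg (g 0)).trans (hC 0)
  refine ⟨2 * ‖S‖ * C + 1, by nlinarith [norm_nonneg S], ?_⟩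
  intro a s ha0
  set w : Y := ∑ i ∈ s, a i • y i with hw
  have hstar : ∀ j, ystar j w = a j := by
    intro j
    by_cases hj : j ∈ s
    · simp [hw, map_sum, hbi, mul_ite, Finset.sum_ite_eq, hj, eq_comm]
    · rw [ha0 j hj]
      simp [hw, map_sum, hbi, mul_ite, Finset.sum_ite_eq, hj, eq_comm]
  have hg' : ∀ k, g k w = ∑ i ∈ Finset.range k, a i • y i := by
    intro k; rw [hgw]; exact Finset.sum_congr rfl fun i _ => by rw [hstar]
  have hwnn : (0:ℝ) ≤ ‖w‖ := norm_nonneg w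
  apply ciSup_le
  rintro ⟨m, n⟩
  by_cases hmn : m ≤ n
  · have hdiff : g (n + 1) w - g m w = ∑ i ∈ Finset.Icc m n, a i • y i := by
      rw [hg', hg', ← Finset.Ico_add_one_right_eq_Icc, Finset.sum_Ico_eq_sub _ (by omega)]
    have hsum : (∑ i ∈ Finset.Icc m n, a i • x i) = S (g (n + 1) w - g m w) := by
      rw [hdiff, map_sum]
      exact Finset.sum_congr rfl fun i _ => by rw [map_smul, hS]
    have h1 : ‖g (n + 1) w‖ ≤ C * ‖w‖ :=
      ((g (n + 1)).le_opNorm w).trans (by gcongr; exact hC _)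
    have h2 : ‖g m w‖ ≤ C * ‖w‖ :=
      ((g m).le_opNorm w).trans (by gcongr; exact hC _)
    calc ‖∑ i ∈ Finset.Icc m n, a i • x i‖ = ‖S (g (n + 1) w - g m w)‖ := by rw [hsum]
      _ ≤ ‖S‖ * ‖g (n + 1) w - g m w‖ := S.le_opNorm _
      _ ≤ ‖S‖ * (‖g (n + 1) w‖ + ‖g m w‖) := by
          gcongr; exact norm_sub_le _ _
      _ ≤ ‖S‖ * (C * ‖w‖ + C * ‖w‖) := by gcongr
      _ ≤ (2 * ‖S‖ * C + 1) * ‖w‖ := by nlinarith [norm_nonneg S]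
  · have : Finset.Icc m n = ∅ := Finset.Icc_eq_empty (by omega)
    rw [this]
    simp only [Finset.sum_empty, norm_zero]
    positivity
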